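/- arXiv:2410.19638 — 3 statements merged into one kernel-verified Lean document; each statement's English description precedes it below -/
import Mathlib

section
/- In any swap sequence on a graph, if some pair of tokens t1, t2 swap with each other at two different steps, then removing both of those swaps from the sequence yields a shorter sequence producing the same final configuration. -/
/-- Apply a list of swaps (each along an edge, given as a pair of vertices)
to a configuration `f : T ≃ V` assigning tokens to vertices. -/
noncomputable def applySwaps {V T : Type*} (f : T ≃ V) (s : List (V × V)) : T ≃ V :=
  letI := Classical.decEq V
  s.foldl (fun g e => g.trans (Equiv.swap e.1 e.2)) f

lemma applySwaps_append {V T : Type*} (f : T ≃ V) (s t : List (V × V)) :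
    applySwaps f (s ++ t) = applySwaps (applySwaps f s) t := by
  simp [applySwaps, List.foldl_append]

lemma applySwaps_single {V T : Type*} (f : T ≃ V) (e : V × V) :
    applySwaps f [e] = letI := Classical.decEq V; f.trans (Equiv.swap e.1 e.2) := rfl

lemma applySwaps_trans {V T : Type*} (σ : T ≃ T) (f : T ≃ V) (s : List (V × V)) :
    applySwaps (σ.trans f) s = σ.trans (applySwaps f s) := by
  classical
  induction s generalizing f with
  | nil => rfl
  | cons e s ih =>
    show applySwaps ((σ.trans f).trans (Equiv.swap e.1 e.2)) s
        = σ.trans (applySwaps (f.trans (Equiv.swap e.1 e.2)) s)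
    rw [Equiv.trans_assoc, ih]

lemma swap_conj {V T : Type*} (f : T ≃ V) (v1 v2 : V) (t1 t2 : T)
    (h : (f.symm v1 = t1 ∧ f.symm v2 = t2) ∨ (f.symm v1 = t2 ∧ f.symm v2 = t1)) :
    letI := Classical.decEq V; letI := Classical.decEq T;
    f.trans (Equiv.swap v1 v2) = (Equiv.swap t1 t2).trans f := by
  classical
  have key : ∀ w1 w2 : V, f.trans (Equiv.swap w1 w2)
      = (Equiv.swap (f.symm w1) (f.symm w2)).trans f := by
    intro w1 w2
    ext t
    simp only [Equiv.trans_apply]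
    simp only [Equiv.swap_apply_def, Equiv.apply_eq_iff_eq_symm_apply]
    split_ifs <;> simp_all
  rcases h with ⟨ha, hb⟩ | ⟨ha, hb⟩
  · rw [key, ha, hb]
  · rw [key, ha, hb, Equiv.swap_comm]

/-- If in the swap sequence `a ++ [e1] ++ b ++ [e2] ++ c` the swaps `e1` and `e2`
both exchange the same two tokens `t1, t2` (at the moment they are performed),
then removing both of those swaps yields a shorter sequence with the same
final configuration. -/
theorem stmt1 {V T : Type*} (f : T ≃ V) (a b c : List (V × V)) (e1 e2 : V × V)
    (t1 t2 : T)
    (h1 : ((applySwaps f a).symm e1.1 = t1 ∧ (applySwaps f a).symm e1.2 = t2) ∨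
          ((applySwaps f a).symm e1.1 = t2 ∧ (applySwaps f a).symm e1.2 = t1))
    (h2 : ((applySwaps f (a ++ [e1] ++ b)).symm e2.1 = t1 ∧
           (applySwaps f (a ++ [e1] ++ b)).symm e2.2 = t2) ∨
          ((applySwaps f (a ++ [e1] ++ b)).symm e2.1 = t2 ∧
           (applySwaps f (a ++ [e1] ++ b)).symm e2.2 = t1)) :
    applySwaps f (a ++ b ++ c) = applySwaps f (a ++ [e1] ++ b ++ [e2] ++ c) ∧
    (a ++ b ++ c).length < (a ++ [e1] ++ b ++ [e2] ++ c).length := by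
  classical
  have k1 : applySwaps f (a ++ [e1] ++ b)
      = (Equiv.swap t1 t2).trans (applySwaps f (a ++ b)) := by
    rw [applySwaps_append, applySwaps_append, applySwaps_single,
      swap_conj _ _ _ _ _ h1, applySwaps_trans, applySwaps_append]
  have k2 : applySwaps f (a ++ [e1] ++ b ++ [e2] ++ c)
      = applySwaps f (a ++ b ++ c) := by
    rw [applySwaps_append (s := a ++ [e1] ++ b ++ [e2]),
      applySwaps_append (s := a ++ [e1] ++ b), applySwaps_single,
      swap_conj _ _ _ _ _ h2, k1, ← Equiv.trans_assoc, Equiv.swap_swap,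
      Equiv.refl_trans, ← applySwaps_append]
  refine ⟨k2.symm, ?_⟩
  simp
end

section
/- Let π be a permutation of the vertices of a connected graph G (mapping each vertex to the target of the token starting on it) with cycle decomposition C_1 ∘ ... ∘ C_k, where cycle C_i has vertices v_{i,0},...,v_{i,ℓ_i−1}. Then there exists a solving swap sequence of length Σ_{i=1}^{k} Σ_{j=1}^{ℓ_i−1} (2·dist(v_{i,j−1}, v_{i,j}) − 1), and this quantity is strictly less than 2·total(K) whenever π is not the identity. -/
namespace Stmt7Aux

lemma swap_indep {α : Type*} (I J : DecidableEq α) (a b : α) :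
    @Equiv.swap α I a b = @Equiv.swap α J a b := by
  rw [Subsingleton.elim I J]

variable {n : ℕ}

/-- Product of a list of swaps. -/
noncomputable def prodS (s : List (Fin n × Fin n)) : Equiv.Perm (Fin n) :=
  applySwaps (Equiv.refl (Fin n)) s

lemma applySwaps_nil (f : Fin n ≃ Fin n) : applySwaps f [] = f := rfl

lemma applySwaps_cons (f : Fin n ≃ Fin n) (e : Fin n × Fin n) (s : List (Fin n × Fin n)) :
    applySwaps f (e :: s) = applySwaps (f.trans (Equiv.swap e.1 e.2)) s := by
  simp only [applySwaps, List.foldl_cons]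
  congr 2
  exact swap_indep _ _ _ _

lemma applySwaps_eq (s : List (Fin n × Fin n)) :
    ∀ f : Fin n ≃ Fin n, applySwaps f s = f.trans (prodS s) := by
  induction s with
  | nil => intro f; simp [prodS, applySwaps_nil]
  | cons e s ih =>
    intro f
    rw [applySwaps_cons, ih]
    have h2 : prodS (e :: s) = ((Equiv.refl (Fin n)).trans (Equiv.swap e.1 e.2)).trans (prodS s) := by
      show applySwaps (Equiv.refl (Fin n)) (e :: s) = _
      rw [applySwaps_cons, ih]
    rw [h2, Equiv.refl_trans, ← Equiv.trans_assoc]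

lemma prodS_nil : (prodS [] : Equiv.Perm (Fin n)) = Equiv.refl _ := rfl

lemma prodS_cons (e : Fin n × Fin n) (s : List (Fin n × Fin n)) :
    prodS (e :: s) = (Equiv.swap e.1 e.2).trans (prodS s) := by
  rw [prodS, applySwaps_cons, applySwaps_eq, Equiv.refl_trans]

lemma prodS_append (s t : List (Fin n × Fin n)) :
    prodS (s ++ t) = (prodS s).trans (prodS t) := by
  induction s with
  | nil => simp [prodS_nil]
  | cons e s ih =>
    rw [List.cons_append, prodS_cons, ih, prodS_cons, Equiv.trans_assoc]

variable (G : SimpleGraph (Fin n))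

/-- `σ` is realizable by `m` adjacent swaps. -/
def Real (σ : Equiv.Perm (Fin n)) (m : ℕ) : Prop :=
  ∃ s : List (Fin n × Fin n), (∀ e ∈ s, G.Adj e.1 e.2) ∧ prodS s = σ ∧ s.length = m

lemma real_refl : Real G (Equiv.refl _) 0 := ⟨[], by simp, prodS_nil, rfl⟩

lemma real_trans {σ τ : Equiv.Perm (Fin n)} {a b : ℕ} (h1 : Real G σ a) (h2 : Real G τ b) :
    Real G (σ.trans τ) (a + b) := by
  obtain ⟨s, hs, hps, hls⟩ := h1
  obtain ⟨t, ht, hpt, hlt⟩ := h2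
  refine ⟨s ++ t, ?_, ?_, ?_⟩
  · intro e he
    rcases List.mem_append.1 he with h | h
    · exact hs e h
    · exact ht e h
  · rw [prodS_append, hps, hpt]
  · simp [hls, hlt]

lemma real_pad : ∀ {a b : Fin n} (q : G.Walk a b), Real G (Equiv.refl _) (2 * q.length) := by
  intro a b q
  induction q with
  | nil => simpa using real_refl G
  | @cons u x v h p ih =>
    obtain ⟨s, hs, hps, hls⟩ := ih
    refine ⟨(u, x) :: (u, x) :: s, ?_, ?_, ?_⟩
    · intro e he
      simp only [List.mem_cons] at he
      rcases he with rfl | rfl | he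
      · exact h
      · exact h
      · exact hs e he
    · rw [prodS_cons, prodS_cons, hps, ← Equiv.trans_assoc]
      simp [Equiv.swap_swap]
    · simp only [List.length_cons, hls, SimpleGraph.Walk.length_cons]
      ring

lemma real_swap_of_walk : ∀ {u v : Fin n}, u ≠ v → ∀ (p : G.Walk u v),
    Real G (Equiv.swap u v) (2 * p.length - 1) := by
  intro u v hne p
  induction p with
  | nil => exact absurd rfl hne
  | @cons u b v h q ih =>
    by_cases hbv : b = v
    · subst hbv
      obtain ⟨s, hs, hps, hls⟩ := real_pad G q
      refine ⟨s ++ [(u, b)], ?_, ?_, ?_⟩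
      · intro e he
        rcases List.mem_append.1 he with h' | h'
        · exact hs e h'
        · rw [List.mem_singleton] at h'; subst h'; exact h
      · rw [prodS_append, hps, prodS_cons, prodS_nil, Equiv.refl_trans, Equiv.trans_refl]
      · simp only [List.length_append, List.length_cons, List.length_nil, hls,
          SimpleGraph.Walk.length_cons]
        omega
    · have hub : u ≠ b := h.ne
      obtain ⟨s, hs, hps, hls⟩ := ih hbv
      refine ⟨(u, b) :: (s ++ [(u, b)]), ?_, ?_, ?_⟩
      · intro e he
        simp only [List.mem_cons] at he
        rcases he with rfl | he
        · exact h
        · rcases List.mem_append.1 he with h' | h'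
          · exact hs e h'
          · rw [List.mem_singleton] at h'; subst h'; exact h
      · rw [prodS_cons, prodS_append, hps, prodS_cons, prodS_nil, Equiv.trans_refl]
        have key := Equiv.swap_mul_swap_mul_swap (x := v) (y := b) (z := u)
          (Ne.symm hbv) (Ne.symm hne)
        calc (Equiv.swap u b).trans ((Equiv.swap b v).trans (Equiv.swap u b))
            = Equiv.swap u b * Equiv.swap b v * Equiv.swap u b := by
              simp [Equiv.Perm.mul_def, Equiv.trans_assoc]
          _ = Equiv.swap b u * Equiv.swap v b * Equiv.swap b u := by
              rw [Equiv.swap_comm u b, Equiv.swap_comm b v]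
          _ = Equiv.swap u v := key
      · have hq : q.length ≠ 0 := fun h0 => hbv (SimpleGraph.Walk.eq_of_length_eq_zero h0)
        simp only [List.length_cons, List.length_append, List.length_nil, hls,
          SimpleGraph.Walk.length_cons]
        omega

lemma real_swap (hG : G.Connected) (u v : Fin n) :
    Real G (Equiv.swap u v) (2 * G.dist u v - 1) := by
  by_cases huv : u = v
  · subst huv
    simpa [Equiv.swap_self, SimpleGraph.dist_self] using real_refl G
  · obtain ⟨p, hp⟩ := hG.exists_walk_length_eq_dist u v
    rw [← hp]
    exact real_swap_of_walk G huv p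

/-- The cycle `(v 0, v 1, ..., v (t-1))` as a product of transpositions. -/
noncomputable def cyc (v : ℕ → Fin n) : ℕ → Equiv.Perm (Fin n)
  | 0 => Equiv.refl _
  | 1 => Equiv.refl _
  | (t + 2) => (Equiv.swap (v t) (v (t + 1))).trans (cyc v (t + 1))

lemma cyc_fix (v : ℕ → Fin n) : ∀ (t : ℕ) (x : Fin n), (∀ j, j < t → x ≠ v j) →
    cyc v t x = x := by
  intro t
  induction t with
  | zero => intro x _; rfl
  | succ t ih =>
    cases t with
    | zero => intro x _; rfl
    | succ t' =>
      intro x hx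
      show cyc v (t' + 1) ((Equiv.swap (v t') (v (t' + 1))) x) = x
      rw [Equiv.swap_apply_of_ne_of_ne (hx t' (by omega)) (hx (t' + 1) (by omega))]
      exact ih x (fun j hj => hx j (by omega))

lemma cyc_step (v : ℕ → Fin n) : ∀ (t : ℕ),
    (∀ a, a < t → ∀ b, b < t → v a = v b → a = b) →
    ∀ j, j + 1 < t → cyc v t (v j) = v (j + 1) := by
  intro t
  induction t with
  | zero => intro _ j hj; omega
  | succ t ih =>
    cases t with
    | zero => intro _ j hj; omega
    | succ t' =>
      intro hinj j hj
      show cyc v (t' + 1) ((Equiv.swap (v t') (v (t' + 1))) (v j)) = v (j + 1)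
      rcases Nat.lt_or_ge j t' with hjt | hjt
      · have h1 : v j ≠ v t' := fun h => absurd (hinj j (by omega) t' (by omega) h) (by omega)
        have h2 : v j ≠ v (t' + 1) :=
          fun h => absurd (hinj j (by omega) (t' + 1) (by omega) h) (by omega)
        rw [Equiv.swap_apply_of_ne_of_ne h1 h2]
        exact ih (fun a ha b hb h => hinj a (by omega) b (by omega) h) j (by omega)
      · have hj' : j = t' := by omega
        subst hj'
        rw [Equiv.swap_apply_left]
        exact cyc_fix v (j + 1) _ (fun j' hjlt h =>
          by have := hinj (j + 1) (by omega) j' (by omega) h; omega)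

lemma cyc_last (v : ℕ → Fin n) : ∀ (t : ℕ), 1 ≤ t →
    (∀ a, a < t → ∀ b, b < t → v a = v b → a = b) →
    cyc v t (v (t - 1)) = v 0 := by
  intro t
  induction t with
  | zero => omega
  | succ t ih =>
    cases t with
    | zero => intro _ _; rfl
    | succ t' =>
      intro _ hinj
      show cyc v (t' + 1) ((Equiv.swap (v t') (v (t' + 1))) (v (t' + 1))) = v 0
      rw [Equiv.swap_apply_right]
      have := ih (by omega) (fun a ha b hb h => hinj a (by omega) b (by omega) h)
      simpa using this

lemma real_cyc (hG : G.Connected) (v : ℕ → Fin n) :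
    ∀ t : ℕ, Real G (cyc v t)
      (∑ j ∈ Finset.Ico 1 t, (2 * G.dist (v (j - 1)) (v j) - 1)) := by
  intro t
  induction t with
  | zero => simpa [cyc] using real_refl G
  | succ t ih =>
    cases t with
    | zero => simpa [cyc] using real_refl G
    | succ t' =>
      rw [Finset.sum_Ico_succ_top (by omega)]
      have h1 := real_swap G hG (v t') (v (t' + 1))
      have h2 := real_trans G h1 ih
      have : cyc v (t' + 2) = (Equiv.swap (v t') (v (t' + 1))).trans (cyc v (t' + 1)) := rfl
      rw [this]
      simpa [Nat.add_comm] using h2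

/-- Fold of permutations over a list of indices. -/
noncomputable def foldPerm {k : ℕ} (c : Fin k → Equiv.Perm (Fin n)) (L : List (Fin k)) :
    Equiv.Perm (Fin n) :=
  L.foldl (fun g i => g.trans (c i)) (Equiv.refl _)

lemma foldPerm_eq {k : ℕ} (c : Fin k → Equiv.Perm (Fin n)) (L : List (Fin k)) :
    ∀ g : Equiv.Perm (Fin n), L.foldl (fun g i => g.trans (c i)) g = g.trans (foldPerm c L) := by
  induction L with
  | nil => intro g; simp [foldPerm]
  | cons a L ih =>
    intro g
    show L.foldl _ (g.trans (c a)) = _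
    rw [ih]
    have h2 : foldPerm c (a :: L) = ((Equiv.refl (Fin n)).trans (c a)).trans (foldPerm c L) := by
      show L.foldl _ ((Equiv.refl (Fin n)).trans (c a)) = _
      rw [ih]
    rw [h2, Equiv.refl_trans, ← Equiv.trans_assoc]

lemma foldPerm_nil {k : ℕ} (c : Fin k → Equiv.Perm (Fin n)) :
    foldPerm c [] = Equiv.refl _ := rfl

lemma foldPerm_cons {k : ℕ} (c : Fin k → Equiv.Perm (Fin n)) (a : Fin k) (L : List (Fin k)) :
    foldPerm c (a :: L) = (c a).trans (foldPerm c L) := by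
  rw [foldPerm, List.foldl_cons, foldPerm_eq, Equiv.refl_trans]

lemma foldPerm_fix {k : ℕ} (c : Fin k → Equiv.Perm (Fin n)) (L : List (Fin k)) (x : Fin n)
    (h : ∀ i ∈ L, c i x = x) : foldPerm c L x = x := by
  induction L with
  | nil => rfl
  | cons a L ih =>
    rw [foldPerm_cons]
    simp only [Equiv.trans_apply]
    rw [h a (by simp), ih (fun i hi => h i (by simp [hi]))]

lemma foldPerm_eval {k : ℕ} (c : Fin k → Equiv.Perm (Fin n)) (L : List (Fin k))
    (hnd : L.Nodup) (i : Fin k) (hi : i ∈ L) (x y : Fin n) (hxy : c i x = y)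
    (hfix : ∀ i' ∈ L, i' ≠ i → c i' x = x) (hfixy : ∀ i' ∈ L, i' ≠ i → c i' y = y) :
    foldPerm c L x = y := by
  induction L with
  | nil => cases hi
  | cons a L ih =>
    rw [foldPerm_cons]
    simp only [Equiv.trans_apply]
    by_cases ha : a = i
    · subst ha
      rw [hxy]
      refine foldPerm_fix c L y (fun i' hi' => ?_)
      have : i' ≠ a := fun h => by subst h; exact (List.nodup_cons.1 hnd).1 hi'
      exact hfixy i' (by simp [hi']) this
    · rw [hfix a List.mem_cons_self ha]
      have hi2 : i ∈ L := by
        rcases List.mem_cons.1 hi with h | h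
        · exact absurd h.symm ha
        · exact h
      exact ih (List.nodup_cons.1 hnd).2 hi2
        (fun i' hi'' h => hfix i' (List.mem_cons_of_mem a hi'') h)
        (fun i' hi'' h => hfixy i' (List.mem_cons_of_mem a hi'') h)

lemma real_fold {k : ℕ} (c : Fin k → Equiv.Perm (Fin n)) (m : Fin k → ℕ)
    (h : ∀ i, Real G (c i) (m i)) :
    ∀ L : List (Fin k), Real G (foldPerm c L) ((L.map m).sum) := by
  intro L
  induction L with
  | nil => simpa [foldPerm_nil] using real_refl G
  | cons a L ih =>
    rw [foldPerm_cons]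
    simpa using real_trans G (h a) ih

end Stmt7Aux

/-- Given a permutation `π` of the vertices of a connected graph `G` with cycle
decomposition given by `w : (Σ i, ZMod (ℓ i)) ≃ V` (cycle `i` visits
`w ⟨i,0⟩, w ⟨i,1⟩, ...` and `π (w ⟨i,j⟩) = w ⟨i,j+1⟩`), there is a solving swap
sequence of length `Σ_i Σ_{j=1}^{ℓ_i − 1} (2·dist(v_{i,j−1}, v_{i,j}) − 1)`, and
this quantity is strictly less than `2·total(K)` whenever `π ≠ 1`. -/
theorem stmt7 (n : ℕ) (G : SimpleGraph (Fin n)) (hG : G.Connected)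
    (π : Equiv.Perm (Fin n)) (k : ℕ) (ℓ : Fin k → ℕ) (hℓ : ∀ i, 0 < ℓ i)
    (w : ((i : Fin k) × ZMod (ℓ i)) ≃ Fin n)
    (hcyc : ∀ (i : Fin k) (j : ZMod (ℓ i)), π (w ⟨i, j⟩) = w ⟨i, j + 1⟩) :
    (∃ s : List (Fin n × Fin n), (∀ e ∈ s, G.Adj e.1 e.2) ∧
        applySwaps (Equiv.refl (Fin n)) s = π ∧
        s.length = ∑ i : Fin k, ∑ j ∈ Finset.Ico 1 (ℓ i),
          (2 * G.dist (w ⟨i, ((j - 1 : ℕ) : ZMod (ℓ i))⟩) (w ⟨i, ((j : ℕ) : ZMod (ℓ i))⟩) - 1)) ∧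
    (π ≠ 1 →
      ∑ i : Fin k, ∑ j ∈ Finset.Ico 1 (ℓ i),
          (2 * G.dist (w ⟨i, ((j - 1 : ℕ) : ZMod (ℓ i))⟩) (w ⟨i, ((j : ℕ) : ZMod (ℓ i))⟩) - 1)
        < 2 * ∑ v : Fin n, G.dist v (π v)) := by
  have hNZ : ∀ i, NeZero (ℓ i) := fun i => ⟨(hℓ i).ne'⟩
  set vtx : Fin k → ℕ → Fin n := fun i a => w ⟨i, ((a : ℕ) : ZMod (ℓ i))⟩ with hvtx
  have vinj : ∀ (i : Fin k) (a b : ℕ), a < ℓ i → b < ℓ i → vtx i a = vtx i b → a = b := by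
    intro i a b ha hb hab
    haveI := hNZ i
    have h1 := w.injective hab
    have h2 : ((a : ℕ) : ZMod (ℓ i)) = ((b : ℕ) : ZMod (ℓ i)) :=
      eq_of_heq (Sigma.mk.inj_iff.1 h1).2
    calc a = ((a : ℕ) : ZMod (ℓ i)).val := (ZMod.val_cast_of_lt ha).symm
      _ = ((b : ℕ) : ZMod (ℓ i)).val := by rw [h2]
      _ = b := ZMod.val_cast_of_lt hb
  set c : Fin k → Equiv.Perm (Fin n) := fun i => Stmt7Aux.cyc (vtx i) (ℓ i) with hc
  have hdiff : ∀ (i i' : Fin k) (j : ZMod (ℓ i)) (j' : ℕ), i' ≠ i →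
      w ⟨i, j⟩ ≠ vtx i' j' := by
    intro i i' j j' hne hcontra
    exact hne (congrArg Sigma.fst (w.injective hcontra)).symm
  have hπ : Stmt7Aux.foldPerm c (List.finRange k) = π := by
    apply Equiv.ext
    intro x
    obtain ⟨⟨i, j⟩, rfl⟩ : ∃ p, w p = x := ⟨w.symm x, w.apply_symm_apply x⟩
    haveI := hNZ i
    have hja : ((j.val : ℕ) : ZMod (ℓ i)) = j := ZMod.natCast_rightInverse j
    have hjlt : j.val < ℓ i := ZMod.val_lt j
    have hx : w ⟨i, j⟩ = vtx i j.val := by rw [hvtx]; simp only [hja]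
    rw [hcyc i j]
    have hy : c i (w ⟨i, j⟩) = w ⟨i, j + 1⟩ := by
      rcases Nat.lt_or_ge (j.val + 1) (ℓ i) with hlt | hge
      · have hstep := Stmt7Aux.cyc_step (vtx i) (ℓ i)
          (fun a ha b hb h => vinj i a b ha hb h) j.val hlt
        rw [hc, hx, hstep]
        show w ⟨i, (((j.val + 1 : ℕ)) : ZMod (ℓ i))⟩ = w ⟨i, j + 1⟩
        congr 1
        rw [Nat.cast_add, Nat.cast_one, hja]
      · have hj1 : j.val = ℓ i - 1 := by omega
        have hlast := Stmt7Aux.cyc_last (vtx i) (ℓ i) (hℓ i)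
          (fun a ha b hb h => vinj i a b ha hb h)
        rw [hc, hx, hj1, hlast]
        show w ⟨i, ((0 : ℕ) : ZMod (ℓ i))⟩ = w ⟨i, j + 1⟩
        congr 1
        rw [← hja, hj1]
        have hcast : ((ℓ i - 1 : ℕ) : ZMod (ℓ i)) + 1 = (((ℓ i - 1) + 1 : ℕ) : ZMod (ℓ i)) := by
          push_cast
          ring
        rw [hcast]
        have h3 : ℓ i - 1 + 1 = ℓ i := by omega
        rw [h3, ZMod.natCast_self]
        simp
    apply Stmt7Aux.foldPerm_eval c _ (List.nodup_finRange k) i (List.mem_finRange i) _ _ hy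
    · intro i' _ hne
      exact Stmt7Aux.cyc_fix (vtx i') (ℓ i') _ (fun j' _ => hdiff i i' j j' hne)
    · intro i' _ hne
      exact Stmt7Aux.cyc_fix (vtx i') (ℓ i') _ (fun j' _ => hdiff i i' (j + 1) j' hne)
  have hreal : ∀ i, Stmt7Aux.Real G (c i) (∑ j ∈ Finset.Ico 1 (ℓ i),
      (2 * G.dist (w ⟨i, ((j - 1 : ℕ) : ZMod (ℓ i))⟩) (w ⟨i, ((j : ℕ) : ZMod (ℓ i))⟩) - 1)) :=
    fun i => Stmt7Aux.real_cyc G hG (vtx i) (ℓ i)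
  refine ⟨?_, ?_⟩
  · have hfold := Stmt7Aux.real_fold G c _ hreal (List.finRange k)
    rw [hπ] at hfold
    obtain ⟨s, hs1, hs2, hs3⟩ := hfold
    refine ⟨s, hs1, hs2, ?_⟩
    rw [hs3, ← Fin.sum_univ_def]
  · intro hne
    have hex : ∃ i0, 2 ≤ ℓ i0 := by
      by_contra hno
      push_neg at hno
      apply hne
      apply Equiv.ext
      intro x
      obtain ⟨⟨i, j⟩, rfl⟩ : ∃ p, w p = x := ⟨w.symm x, w.apply_symm_apply x⟩
      rw [hcyc i j]
      have h1 : ℓ i = 1 := by have := hℓ i; have := hno i; omega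
      haveI : Subsingleton (ZMod (ℓ i)) := by rw [h1]; infer_instance
      rw [Subsingleton.elim (j + 1) j]
      simp
    obtain ⟨i0, hi0⟩ := hex
    have hRHS : ∑ v : Fin n, G.dist v (π v)
        = ∑ i : Fin k, ∑ a ∈ Finset.range (ℓ i), G.dist (vtx i a) (vtx i (a + 1)) := by
      rw [← Equiv.sum_comp w (fun v => G.dist v (π v)), ← Finset.univ_sigma_univ,
        Finset.sum_sigma]
      apply Finset.sum_congr rfl
      intro i _
      haveI := hNZ i
      have hb : Function.Bijective (fun a : Fin (ℓ i) => ((a : ℕ) : ZMod (ℓ i))) := by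
        rw [Fintype.bijective_iff_injective_and_card]
        constructor
        · intro a b hab
          simp only at hab
          have hv := congrArg ZMod.val hab
          rwa [ZMod.val_cast_of_lt a.isLt, ZMod.val_cast_of_lt b.isLt, ← Fin.ext_iff] at hv
        · simp [ZMod.card]
      rw [← Fintype.sum_bijective _ hb _
          (fun j => G.dist (w ⟨i, j⟩) (π (w ⟨i, j⟩))) (fun a => rfl),
        ← Fin.sum_univ_eq_sum_range]
      apply Finset.sum_congr rfl
      intro a _
      show G.dist (w ⟨i, ((a : ℕ) : ZMod (ℓ i))⟩) (π (w ⟨i, ((a : ℕ) : ZMod (ℓ i))⟩))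
          = G.dist (vtx i (a : ℕ)) (vtx i ((a : ℕ) + 1))
      rw [hcyc]
      show G.dist (w ⟨i, ((a : ℕ) : ZMod (ℓ i))⟩) (w ⟨i, ((a : ℕ) : ZMod (ℓ i)) + 1⟩)
          = G.dist (vtx i (a : ℕ)) (vtx i ((a : ℕ) + 1))
      rw [hvtx]
      congr 2
      push_cast
      ring
    have hA : ∀ i : Fin k, (∑ j ∈ Finset.Ico 1 (ℓ i),
        (2 * G.dist (w ⟨i, ((j - 1 : ℕ) : ZMod (ℓ i))⟩) (w ⟨i, ((j : ℕ) : ZMod (ℓ i))⟩) - 1))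
        = ∑ a ∈ Finset.range (ℓ i - 1), (2 * G.dist (vtx i a) (vtx i (a + 1)) - 1) := by
      intro i
      rw [Finset.sum_Ico_eq_sum_range]
      apply Finset.sum_congr rfl
      intro a _
      have h1 : 1 + a - 1 = a := by omega
      have h2 : 1 + a = a + 1 := by omega
      rw [h1, h2, hvtx]
    have hle : ∀ i : Fin k, (∑ a ∈ Finset.range (ℓ i - 1),
        (2 * G.dist (vtx i a) (vtx i (a + 1)) - 1))
        ≤ 2 * ∑ a ∈ Finset.range (ℓ i), G.dist (vtx i a) (vtx i (a + 1)) := by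
      intro i
      rw [Finset.mul_sum]
      calc (∑ a ∈ Finset.range (ℓ i - 1), (2 * G.dist (vtx i a) (vtx i (a + 1)) - 1))
          ≤ ∑ a ∈ Finset.range (ℓ i - 1), 2 * G.dist (vtx i a) (vtx i (a + 1)) :=
            Finset.sum_le_sum (fun a _ => Nat.sub_le _ _)
        _ ≤ _ := Finset.sum_le_sum_of_subset (Finset.range_subset_range.2 (by omega))
    have hlt : (∑ a ∈ Finset.range (ℓ i0 - 1),
        (2 * G.dist (vtx i0 a) (vtx i0 (a + 1)) - 1))
        < 2 * ∑ a ∈ Finset.range (ℓ i0), G.dist (vtx i0 a) (vtx i0 (a + 1)) := by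
      have hpos : ∀ a ∈ Finset.range (ℓ i0 - 1), 0 < G.dist (vtx i0 a) (vtx i0 (a + 1)) := by
        intro a ha
        simp only [Finset.mem_range] at ha
        apply hG.pos_dist_of_ne
        intro hcontra
        have := vinj i0 a (a + 1) (by omega) (by omega) hcontra
        omega
      calc (∑ a ∈ Finset.range (ℓ i0 - 1), (2 * G.dist (vtx i0 a) (vtx i0 (a + 1)) - 1))
          < ∑ a ∈ Finset.range (ℓ i0 - 1), 2 * G.dist (vtx i0 a) (vtx i0 (a + 1)) := by
            apply Finset.sum_lt_sum_of_nonempty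
            · exact ⟨0, Finset.mem_range.2 (by omega)⟩
            · intro a ha
              have := hpos a ha
              omega
        _ ≤ _ := by
            rw [Finset.mul_sum]
            exact Finset.sum_le_sum_of_subset (Finset.range_subset_range.2 (by omega))
    rw [hRHS, Finset.mul_sum]
    calc (∑ i : Fin k, ∑ j ∈ Finset.Ico 1 (ℓ i),
          (2 * G.dist (w ⟨i, ((j - 1 : ℕ) : ZMod (ℓ i))⟩) (w ⟨i, ((j : ℕ) : ZMod (ℓ i))⟩) - 1))
        = ∑ i : Fin k, ∑ a ∈ Finset.range (ℓ i - 1),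
            (2 * G.dist (vtx i a) (vtx i (a + 1)) - 1) :=
          Finset.sum_congr rfl (fun i _ => hA i)
      _ < ∑ i : Fin k, 2 * ∑ a ∈ Finset.range (ℓ i), G.dist (vtx i a) (vtx i (a + 1)) :=
          Finset.sum_lt_sum (fun i _ => hle i) ⟨i0, Finset.mem_univ _, hlt⟩
end

section
/- In the barrier construction graph (outer cycle of length pq with p even segments and, for each j, an inner path P_j of 2q−2 edges joining v_j and v_{j+2q}), for any two vertices a, b lying on the same inner cycle C^in_j, every path from a to b that uses at least one edge not in C^in_j has length at least dist(a,b) + 2. -/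
/-- Vertices of the barrier construction: the outer cycle `v_0, ..., v_{pq-1}`
(as `ZMod (p*q)`) together with, for each `j`, the `2q-3` internal vertices of
the inner path `P_j` of `2q-2` edges joining `v_j` and `v_{j+2q}`. -/
abbrev BV (p q : ℕ) := ZMod (p * q) ⊕ (ZMod (p * q) × Fin (2 * q - 3))

/-- Adjacency of the barrier construction: outer cycle edges, and for each `j`
the inner path `P_j = v_j, (j,0), (j,1), ..., (j,2q-4), v_{j+2q}`. -/
def barrierAdj (p q : ℕ) (a b : BV p q) : Prop :=
  (∃ i : ZMod (p * q), a = Sum.inl i ∧ b = Sum.inl (i + 1)) ∨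
  (∃ (j : ZMod (p * q)) (x : Fin (2 * q - 3)), x.val = 0 ∧
    a = Sum.inl j ∧ b = Sum.inr (j, x)) ∨
  (∃ (j : ZMod (p * q)) (x y : Fin (2 * q - 3)), y.val = x.val + 1 ∧
    a = Sum.inr (j, x) ∧ b = Sum.inr (j, y)) ∨
  (∃ (j : ZMod (p * q)) (x : Fin (2 * q - 3)), x.val = 2 * q - 4 ∧
    a = Sum.inr (j, x) ∧ b = Sum.inl (j + ((2 * q : ℕ) : ZMod (p * q))))

def barrierGraph (p q : ℕ) : SimpleGraph (BV p q) :=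
  SimpleGraph.fromRel (barrierAdj p q)

/-- The inner cycle `C^in_j`: the union of the inner paths
`P_j, P_{j+2q}, P_{j+4q}, ...` (including their outer endpoints). -/
def innerCycle (p q : ℕ) (j : ZMod (p * q)) : Set (BV p q) :=
  {w | ∃ r : ℕ, w = Sum.inl (j + ((2 * q * r : ℕ) : ZMod (p * q))) ∨
      ∃ x : Fin (2 * q - 3), w = Sum.inr (j + ((2 * q * r : ℕ) : ZMod (p * q)), x)}

namespace Stmt12Aux

variable (p q : ℕ) (j : ZMod (p * q))

/-- first Lipschitz coordinate -/
def posF : BV p q → ℕ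
  | Sum.inl i => (i - j).val / (2 * q) * (2 * q - 2) + min ((i - j).val % (2 * q)) (2 * q - 2)
  | Sum.inr (i, x) =>
      (i - j).val / (2 * q) * (2 * q - 2) + min ((i - j).val % (2 * q)) (2 * q - 2) + x.val + 1

/-- second Lipschitz coordinate -/
def posG : BV p q → ℕ
  | Sum.inl i => (i - j).val / (2 * q) * (2 * q - 2) + ((i - j).val % (2 * q) - 2)
  | Sum.inr (i, x) =>
      (i - j).val / (2 * q) * (2 * q - 2) + ((i - j).val % (2 * q) - 2) + x.val + 1

/-- parity coordinate -/
def cparN : BV p q → ℕ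
  | Sum.inl i => (i - j).val
  | Sum.inr (i, x) => (i - j).val + x.val + 1

lemma divmod {Q : ℕ} (r s : ℕ) (h : s < Q) : (Q * r + s) / Q = r ∧ (Q * r + s) % Q = s := by
  constructor
  · rw [Nat.mul_add_div (by omega)]; simp [Nat.div_eq_of_lt h]
  · rw [Nat.mul_add_mod, Nat.mod_eq_of_lt h]

lemma mem_inl_iff (hp : Even p) (hp2 : 2 ≤ p) (hq : 2 ≤ q) (i : ZMod (p * q)) :
    Sum.inl i ∈ innerCycle p q j ↔ (i - j).val % (2 * q) = 0 := by
  haveI : NeZero (p * q) := ⟨by positivity⟩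
  obtain ⟨p₂, hp₂⟩ := hp
  have hN : p * q = 2 * q * p₂ := by rw [hp₂]; ring
  constructor
  · rintro ⟨r, hr | ⟨x, hx⟩⟩
    · rw [Sum.inl.injEq] at hr
      have : i - j = ((2 * q * r : ℕ) : ZMod (p * q)) := by rw [hr]; ring
      rw [this, ZMod.val_natCast]
      rw [hN, Nat.mul_mod_mul_left, Nat.mul_mod_right]
    · exact absurd hx (by simp)
  · intro h
    refine ⟨(i - j).val / (2 * q), Or.inl ?_⟩
    have h2 : 2 * q * ((i - j).val / (2 * q)) = (i - j).val :=
      Nat.mul_div_cancel' (Nat.dvd_of_mod_eq_zero h)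
    rw [h2]
    have : (((i - j).val : ℕ) : ZMod (p * q)) = i - j := by
      rw [ZMod.natCast_val, ZMod.cast_id]
    rw [this]; ring_nf

lemma mem_inr_iff (hp : Even p) (hp2 : 2 ≤ p) (hq : 2 ≤ q) (i : ZMod (p * q))
    (x : Fin (2 * q - 3)) :
    Sum.inr (i, x) ∈ innerCycle p q j ↔ (i - j).val % (2 * q) = 0 := by
  haveI : NeZero (p * q) := ⟨by positivity⟩
  obtain ⟨p₂, hp₂⟩ := hp
  have hN : p * q = 2 * q * p₂ := by rw [hp₂]; ring
  constructor
  · rintro ⟨r, hr | ⟨y, hy⟩⟩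
    · exact absurd hr (by simp)
    · rw [Sum.inr.injEq, Prod.mk.injEq] at hy
      have : i - j = ((2 * q * r : ℕ) : ZMod (p * q)) := by rw [hy.1]; ring
      rw [this, ZMod.val_natCast, hN, Nat.mul_mod_mul_left, Nat.mul_mod_right]
  · intro h
    refine ⟨(i - j).val / (2 * q), Or.inr ⟨x, ?_⟩⟩
    have h2 : 2 * q * ((i - j).val / (2 * q)) = (i - j).val :=
      Nat.mul_div_cancel' (Nat.dvd_of_mod_eq_zero h)
    rw [h2]
    have : (((i - j).val : ℕ) : ZMod (p * q)) = i - j := by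
      rw [ZMod.natCast_val, ZMod.cast_id]
    rw [this]
    congr 1
    ring_nf

end Stmt12Aux

namespace Stmt12Aux
variable (p q : ℕ) (j : ZMod (p * q))

lemma castnat {m a b s k : ℕ} (h : a + m * k = b + s) :
    (a : ZMod m) = (b : ZMod m) + ((s : ℤ) : ZMod m) := by
  have h2 : ((a + m * k : ℕ) : ZMod m) = ((b + s : ℕ) : ZMod m) := by rw [h]
  push_cast at h2
  simp only [ZMod.natCast_self, zero_mul, add_zero] at h2
  push_cast
  exact h2

/-- Data attached to one oriented edge. -/
def StepData (u w : BV p q) (s1 s2 : ℤ) : Prop :=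
  s1.natAbs ≤ 1 ∧ s2.natAbs ≤ 1 ∧
  ((posF p q j w : ZMod (p * q - p)) = (posF p q j u : ZMod (p * q - p)) + s1) ∧
  ((posG p q j w : ZMod (p * q - p)) = (posG p q j u : ZMod (p * q - p)) + s2) ∧
  (s1 - s2 = ((posF p q j w : ℤ) - posG p q j w) - ((posF p q j u : ℤ) - posG p q j u)) ∧
  (cparN p q j w % 2 = (cparN p q j u + 1) % 2) ∧
  (u ∈ innerCycle p q j → w ∉ innerCycle p q j → s1 = 0 ∨ s2 = 0) ∧
  (w ∈ innerCycle p q j → u ∉ innerCycle p q j → s1 = 0 ∨ s2 = 0)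

lemma StepData.symm {u w : BV p q} {s1 s2 : ℤ} (h : StepData p q j u w s1 s2) :
    StepData p q j w u (-s1) (-s2) := by
  obtain ⟨h1, h2, h3, h4, h5, h6, h7, h8⟩ := h
  refine ⟨by omega, by omega, by rw [h3]; push_cast; ring, by rw [h4]; push_cast; ring,
    by push_cast; omega, by omega, ?_, ?_⟩
  · intro ha hb; rcases h8 ha hb with h | h <;> [left; right] <;> omega
  · intro ha hb; rcases h7 ha hb with h | h <;> [left; right] <;> omega

end Stmt12Aux

namespace Stmt12Aux
variable (p q : ℕ) (j : ZMod (p * q))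

set_option maxHeartbeats 1000000 in
lemma step_of_rel (hp : Even p) (hp2 : 2 ≤ p) (hq : 2 ≤ q) {u w : BV p q}
    (h : barrierAdj p q u w) : ∃ s1 s2 : ℤ, StepData p q j u w s1 s2 := by
  haveI : NeZero (p * q) := ⟨by positivity⟩
  haveI : Fact (1 < p * q) := ⟨by nlinarith⟩
  have hpe : Even p := hp
  obtain ⟨p₂, hp₂⟩ := hp
  have hp₂1 : 1 ≤ p₂ := by omega
  have hN : p * q = 2 * q * p₂ := by rw [hp₂]; ring
  have hNe : 2 * q * p₂ = 2 * (q * p₂) := by ring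
  have hm : p * q - p = (2 * q - 2) * p₂ := by
    have e2 : (2 * q - 2) * p₂ = 2 * q * p₂ - 2 * p₂ := by rw [Nat.sub_mul]
    have e3 : 2 * 2 * p₂ ≤ 2 * q * p₂ := Nat.mul_le_mul_right p₂ (by omega)
    have e4 : 2 * 2 * p₂ = 4 * p₂ := by ring
    omega
  rcases h with ⟨i, rfl, rfl⟩ | ⟨i, x, hx, rfl, rfl⟩ | ⟨i, x, y, hxy, rfl, rfl⟩ |
    ⟨i, x, hx, rfl, rfl⟩
  · -- Case 1 : outer edge  inl i → inl (i+1)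
    set n := (i - j).val with hn_def
    have hnlt : n < p * q := ZMod.val_lt _
    have hval : (i + 1 - j).val = (n + 1) % (p * q) := by
      have e : i + 1 - j = (i - j) + 1 := by ring
      rw [e, ZMod.val_add, ZMod.val_one]
    have hdm := Nat.div_add_mod n (2 * q)
    set r := n / (2 * q) with hr_def
    set s := n % (2 * q) with hs_def
    have hs : s < 2 * q := Nat.mod_lt _ (by omega)
    have eFu : posF p q j (Sum.inl i) = r * (2 * q - 2) + min s (2 * q - 2) := by
      simp [posF]; rfl
    have eGu : posG p q j (Sum.inl i) = r * (2 * q - 2) + (s - 2) := by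
      simp [posG]; rfl
    have eCu : cparN p q j (Sum.inl i) = n := by simp [cparN]; rfl
    have huS : (Sum.inl i ∈ innerCycle p q j) ↔ s = 0 := mem_inl_iff p q j hpe hp2 hq i
    have hwS : (Sum.inl (i + 1) ∈ innerCycle p q j) ↔ ((n + 1) % (p * q)) % (2 * q) = 0 := by
      rw [mem_inl_iff p q j hpe hp2 hq, hval]
    by_cases hwrap : n + 1 = p * q
    · -- wrap-around
      obtain ⟨p₃, hp₃⟩ : ∃ p₃, p₂ = p₃ + 1 := ⟨p₂ - 1, by omega⟩
      have hdec : n = 2 * q * p₃ + (2 * q - 1) := by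
        have : 2 * q * p₂ = 2 * q * p₃ + 2 * q := by rw [hp₃]; ring
        omega
      have hr3 : r = p₃ ∧ s = 2 * q - 1 := by
        rw [hr_def, hs_def, hdec]
        exact divmod p₃ (2 * q - 1) (by omega)
      rw [hr3.1, hr3.2] at eFu eGu
      have hval0 : (i + 1 - j).val = 0 := by rw [hval, hwrap, Nat.mod_self]
      have eFw : posF p q j (Sum.inl (i + 1)) = 0 := by simp [posF, hval0]
      have eGw : posG p q j (Sum.inl (i + 1)) = 0 := by simp [posG, hval0]
      have eCw : cparN p q j (Sum.inl (i + 1)) = 0 := by simp [cparN, hval0]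
      have hey : (2 * q - 2) * p₂ = p₃ * (2 * q - 2) + (2 * q - 2) := by rw [hp₃]; ring
      refine ⟨0, 1, by omega, by omega, ?_, ?_, by omega, by omega, ?_, ?_⟩
      · have := castnat (m := p * q - p) (a := posF p q j (Sum.inl (i+1)))
          (b := posF p q j (Sum.inl i)) (s := 0) (k := 1) (by omega)
        simpa using this
      · have := castnat (m := p * q - p) (a := posG p q j (Sum.inl (i+1)))
          (b := posG p q j (Sum.inl i)) (s := 1) (k := 1) (by omega)
        simpa using this
      · intro h1 _; rw [huS] at h1; omega
      · intro _ _; left; rfl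
    · -- no wrap : n + 1 < p*q
      have hlt : n + 1 < p * q := by omega
      have hval1 : (i + 1 - j).val = n + 1 := by rw [hval, Nat.mod_eq_of_lt hlt]
      have eCw : cparN p q j (Sum.inl (i + 1)) = n + 1 := by simp [cparN, hval1]
      by_cases hsl : s < 2 * q - 1
      · -- stay within the arc
        have hdec : n + 1 = 2 * q * r + (s + 1) := by omega
        obtain ⟨hd1, hd2⟩ := divmod (Q := 2 * q) r (s + 1) (by omega)
        have eFw : posF p q j (Sum.inl (i + 1)) =
            r * (2 * q - 2) + min (s + 1) (2 * q - 2) := by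
          simp only [posF, hval1, hdec, hd1, hd2]
        have eGw : posG p q j (Sum.inl (i + 1)) = r * (2 * q - 2) + (s + 1 - 2) := by
          simp only [posG, hval1, hdec, hd1, hd2]
        refine ⟨((min (s + 1) (2 * q - 2) - min s (2 * q - 2) : ℕ) : ℤ),
            (((s + 1 - 2) - (s - 2) : ℕ) : ℤ), by omega, by omega,
            castnat (k := 0) (by omega), castnat (k := 0) (by omega), by omega, by omega,
            ?_, ?_⟩
        · intro h1 _; rw [huS] at h1; right; omega
        · intro h1 _
          rw [hwS, Nat.mod_eq_of_lt hlt, hdec, hd2] at h1; omega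
      · -- s = 2q - 1 : move to next arc, no wrap
        have hs1 : s = 2 * q - 1 := by omega
        have hdec : n + 1 = 2 * q * (r + 1) + 0 := by
          have : 2 * q * (r + 1) = 2 * q * r + 2 * q := by ring
          omega
        obtain ⟨hd1, hd2⟩ := divmod (Q := 2 * q) (r + 1) 0 (by omega)
        have eFw : posF p q j (Sum.inl (i + 1)) = (r + 1) * (2 * q - 2) := by
          simp only [posF, hval1, hdec, hd1, hd2]
          omega
        have eGw : posG p q j (Sum.inl (i + 1)) = (r + 1) * (2 * q - 2) := by
          simp only [posG, hval1, hdec, hd1, hd2]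
          omega
        have hey : (r + 1) * (2 * q - 2) = r * (2 * q - 2) + (2 * q - 2) := by ring
        refine ⟨0, 1, by omega, by omega, ?_, ?_, by omega, by omega, ?_, ?_⟩
        · have := castnat (m := p * q - p) (a := posF p q j (Sum.inl (i+1)))
            (b := posF p q j (Sum.inl i)) (s := 0) (k := 0) (by omega)
          simpa using this
        · have := castnat (m := p * q - p) (a := posG p q j (Sum.inl (i+1)))
            (b := posG p q j (Sum.inl i)) (s := 1) (k := 0) (by omega)
          simpa using this
        · intro h1 _; rw [huS] at h1; omega
        · intro _ _; left; rfl
  · -- Case 2 : inl i → inr (i, x), x = 0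
    refine ⟨1, 1, by omega, by omega, ?_, ?_, ?_, ?_, ?_, ?_⟩
    · have := castnat (m := p * q - p) (a := posF p q j (Sum.inr (i, x)))
        (b := posF p q j (Sum.inl i)) (s := 1) (k := 0) (by simp [posF, hx])
      simpa using this
    · have := castnat (m := p * q - p) (a := posG p q j (Sum.inr (i, x)))
        (b := posG p q j (Sum.inl i)) (s := 1) (k := 0) (by simp [posG, hx])
      simpa using this
    · simp only [posF, posG]; omega
    · simp [cparN, hx]
    · intro h1 h2
      rw [mem_inl_iff p q j hpe hp2 hq] at h1
      exact absurd ((mem_inr_iff p q j hpe hp2 hq i x).2 h1) h2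
    · intro h1 h2
      rw [mem_inr_iff p q j hpe hp2 hq] at h1
      exact absurd ((mem_inl_iff p q j hpe hp2 hq i).2 h1) h2
  · -- Case 3 : inr (i,x) → inr (i,y), y = x+1
    refine ⟨1, 1, by omega, by omega, ?_, ?_, ?_, ?_, ?_, ?_⟩
    · have := castnat (m := p * q - p) (a := posF p q j (Sum.inr (i, y)))
        (b := posF p q j (Sum.inr (i, x))) (s := 1) (k := 0) (by simp only [posF]; omega)
      simpa using this
    · have := castnat (m := p * q - p) (a := posG p q j (Sum.inr (i, y)))
        (b := posG p q j (Sum.inr (i, x))) (s := 1) (k := 0) (by simp only [posG]; omega)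
      simpa using this
    · simp only [posF, posG]; omega
    · simp [cparN, hxy]; omega
    · intro h1 h2
      rw [mem_inr_iff p q j hpe hp2 hq] at h1
      exact absurd ((mem_inr_iff p q j hpe hp2 hq i y).2 h1) h2
    · intro h1 h2
      rw [mem_inr_iff p q j hpe hp2 hq] at h1
      exact absurd ((mem_inr_iff p q j hpe hp2 hq i x).2 h1) h2
  · -- Case 4 : inr (i,x), x = 2q-4 → inl (i + 2q)
    set n := (i - j).val with hn_def
    have hnlt : n < p * q := ZMod.val_lt _
    have hval : (i + ((2 * q : ℕ) : ZMod (p * q)) - j).val = (n + (2 * q) % (p * q)) % (p * q) := by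
      have e : i + ((2 * q : ℕ) : ZMod (p * q)) - j = (i - j) + ((2 * q : ℕ) : ZMod (p * q)) := by
        ring
      rw [e, ZMod.val_add, ZMod.val_natCast]
    have hdm := Nat.div_add_mod n (2 * q)
    set r := n / (2 * q) with hr_def
    set s := n % (2 * q) with hs_def
    have hs : s < 2 * q := Nat.mod_lt _ (by omega)
    have hrlt : r < p₂ := by
      by_contra hc
      push_neg at hc
      have : 2 * q * p₂ ≤ 2 * q * r := Nat.mul_le_mul_left _ hc
      omega
    have eFu : posF p q j (Sum.inr (i, x)) =
        r * (2 * q - 2) + min s (2 * q - 2) + (2 * q - 4) + 1 := by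
      simp [posF, hx]; rfl
    have eGu : posG p q j (Sum.inr (i, x)) =
        r * (2 * q - 2) + (s - 2) + (2 * q - 4) + 1 := by
      simp [posG, hx]; rfl
    have eCu : cparN p q j (Sum.inr (i, x)) = n + (2 * q - 4) + 1 := by simp [cparN, hx]; rfl
    have huS : (Sum.inr (i, x) ∈ innerCycle p q j) ↔ s = 0 := mem_inr_iff p q j hpe hp2 hq i x
    have hwS : (Sum.inl (i + ((2 * q : ℕ) : ZMod (p * q))) ∈ innerCycle p q j) ↔
        ((n + (2 * q) % (p * q)) % (p * q)) % (2 * q) = 0 := by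
      rw [mem_inl_iff p q j hpe hp2 hq, hval]
    clear_value r s
    by_cases hrw : r + 1 < p₂
    · -- no wrap : p₂ ≥ 2 and r + 1 < p₂
      obtain ⟨p₃, hp₃⟩ : ∃ p₃, p₂ = p₃ + 2 := ⟨p₂ - 2, by omega⟩
      have e1 : 2 * q * p₂ = 2 * q * p₃ + 4 * q := by rw [hp₃]; ring
      have h2q : (2 * q) % (p * q) = 2 * q := Nat.mod_eq_of_lt (by omega)
      have hle : 2 * q * (r + 1) ≤ 2 * q * (p₂ - 1) := Nat.mul_le_mul_left _ (by omega)
      have e2 : 2 * q * (p₂ - 1) = 2 * q * p₃ + 2 * q := by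
        have : p₂ - 1 = p₃ + 1 := by omega
        rw [this]; ring
      have e3 : 2 * q * (r + 1) = 2 * q * r + 2 * q := by ring
      have hlt2 : n + 2 * q < p * q := by omega
      have hval1 : (i + ((2 * q : ℕ) : ZMod (p * q)) - j).val = n + 2 * q := by
        rw [hval, h2q, Nat.mod_eq_of_lt hlt2]
      have hdec : n + 2 * q = 2 * q * (r + 1) + s := by omega
      obtain ⟨hd1, hd2⟩ := divmod (Q := 2 * q) (r + 1) s hs
      have eFw : posF p q j (Sum.inl (i + ((2 * q : ℕ) : ZMod (p * q)))) =
          (r + 1) * (2 * q - 2) + min s (2 * q - 2) := by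
        simp only [posF, hval1, hdec, hd1, hd2]
      have eGw : posG p q j (Sum.inl (i + ((2 * q : ℕ) : ZMod (p * q)))) =
          (r + 1) * (2 * q - 2) + (s - 2) := by
        simp only [posG, hval1, hdec, hd1, hd2]
      have eCw : cparN p q j (Sum.inl (i + ((2 * q : ℕ) : ZMod (p * q)))) = n + 2 * q := by
        simpa only [cparN] using hval1
      have hey : (r + 1) * (2 * q - 2) = r * (2 * q - 2) + (2 * q - 2) := by ring
      have key1 : posF p q j (Sum.inl (i + ((2 * q : ℕ) : ZMod (p * q)))) + (p * q - p) * 0 =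
          posF p q j (Sum.inr (i, x)) + 1 := by rw [eFw, eFu, hey]; omega
      have key2 : posG p q j (Sum.inl (i + ((2 * q : ℕ) : ZMod (p * q)))) + (p * q - p) * 0 =
          posG p q j (Sum.inr (i, x)) + 1 := by rw [eGw, eGu, hey]; omega
      refine ⟨1, 1, by omega, by omega, castnat key1, castnat key2, by omega, by omega, ?_, ?_⟩
      · intro h1 h2
        rw [huS] at h1
        rw [hwS, h2q, Nat.mod_eq_of_lt hlt2, hdec, hd2] at h2
        omega
      · intro h1 h2
        rw [hwS, h2q, Nat.mod_eq_of_lt hlt2, hdec, hd2] at h1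
        rw [huS] at h2
        omega
    · -- wrap : r = p₂ - 1
      have hrP : r = p₂ - 1 := by omega
      have hval1 : (i + ((2 * q : ℕ) : ZMod (p * q)) - j).val = s := by
        rcases Nat.lt_or_ge p₂ 2 with hp21 | hp22
        · -- p₂ = 1
          have hp21' : p₂ = 1 := by omega
          have hN2 : p * q = 2 * q := by rw [hN, hp21', Nat.mul_one]
          have hr0 : r = 0 := by omega
          rw [hr0] at hdm
          simp at hdm
          rw [hval, hN2, Nat.mod_self, Nat.add_zero, Nat.mod_eq_of_lt (by omega)]
          omega
        · obtain ⟨p₃, hp₃⟩ : ∃ p₃, p₂ = p₃ + 2 := ⟨p₂ - 2, by omega⟩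
          have e1 : 2 * q * p₂ = 2 * q * p₃ + 4 * q := by rw [hp₃]; ring
          have h2q : (2 * q) % (p * q) = 2 * q := Nat.mod_eq_of_lt (by omega)
          have e2 : 2 * q * (p₂ - 1) = 2 * q * p₃ + 2 * q := by
            have : p₂ - 1 = p₃ + 1 := by omega
            rw [this]; ring
          rw [hrP] at hdm
          have e4 : n + 2 * q = p * q + s := by omega
          rw [hval, h2q, e4, Nat.add_mod_left, Nat.mod_eq_of_lt (by omega)]
      have hd1 : s / (2 * q) = 0 := Nat.div_eq_of_lt hs
      have hd2 : s % (2 * q) = s := Nat.mod_eq_of_lt hs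
      have eFw : posF p q j (Sum.inl (i + ((2 * q : ℕ) : ZMod (p * q)))) =
          min s (2 * q - 2) := by
        simp only [posF, hval1, hd1, hd2, Nat.zero_mul, Nat.zero_add]
      have eGw : posG p q j (Sum.inl (i + ((2 * q : ℕ) : ZMod (p * q)))) = s - 2 := by
        simp only [posG, hval1, hd1, hd2, Nat.zero_mul, Nat.zero_add]
      have eCw : cparN p q j (Sum.inl (i + ((2 * q : ℕ) : ZMod (p * q)))) = s := by
        simpa only [cparN] using hval1
      rw [hrP] at eFu eGu hdm
      have hey : (2 * q - 2) * p₂ = (p₂ - 1) * (2 * q - 2) + (2 * q - 2) := by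
        have e5 : p₂ = (p₂ - 1) + 1 := by omega
        conv_lhs => rw [e5]
        ring
      have heyc : 2 * q * (p₂ - 1) = 2 * (q * (p₂ - 1)) := by ring
      have hnpar : 2 * q * r = 2 * (q * r) := by ring
      have key1 : posF p q j (Sum.inl (i + ((2 * q : ℕ) : ZMod (p * q)))) + (p * q - p) * 1 =
          posF p q j (Sum.inr (i, x)) + 1 := by rw [eFw, eFu, hm, hey]; omega
      have key2 : posG p q j (Sum.inl (i + ((2 * q : ℕ) : ZMod (p * q)))) + (p * q - p) * 1 =
          posG p q j (Sum.inr (i, x)) + 1 := by rw [eGw, eGu, hm, hey]; omega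
      refine ⟨1, 1, by omega, by omega, castnat key1, castnat key2, by omega, ?_, ?_, ?_⟩
      · -- parity : cparN w = s, cparN u = n + 2q - 4 + 1, n = 2q(p₂-1)+s
        omega
      · intro h1 h2
        rw [huS] at h1
        rw [hwS] at h2
        rw [hval] at hval1
        rw [hval1, hd2] at h2
        omega
      · intro h1 h2
        rw [huS] at h2
        rw [hwS] at h1
        rw [hval] at hval1
        rw [hval1, hd2] at h1
        omega
end Stmt12Aux

namespace Stmt12Aux
variable (p q : ℕ) (j : ZMod (p * q))

lemma step_adj (hp : Even p) (hp2 : 2 ≤ p) (hq : 2 ≤ q) {u w : BV p q}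
    (h : (barrierGraph p q).Adj u w) : ∃ s1 s2 : ℤ, StepData p q j u w s1 s2 := by
  rw [barrierGraph, SimpleGraph.fromRel_adj] at h
  rcases h.2 with h' | h'
  · exact step_of_rel p q j hp hp2 hq h'
  · obtain ⟨s1, s2, hs⟩ := step_of_rel p q j hp hp2 hq h'
    exact ⟨-s1, -s2, hs.symm⟩

lemma pos_eq_of_mem (hp : Even p) (hp2 : 2 ≤ p) (hq : 2 ≤ q) {u : BV p q}
    (h : u ∈ innerCycle p q j) : posF p q j u = posG p q j u := by
  haveI : NeZero (p * q) := ⟨by positivity⟩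
  match u with
  | Sum.inl i =>
    have h0 : (i - j).val % (2 * q) = 0 := (mem_inl_iff p q j hp hp2 hq i).1 h
    simp [posF, posG, h0]
  | Sum.inr (i, x) =>
    have h0 : (i - j).val % (2 * q) = 0 := (mem_inr_iff p q j hp hp2 hq i x).1 h
    simp [posF, posG, h0]

lemma walk_bound (hp : Even p) (hp2 : 2 ≤ p) (hq : 2 ≤ q) {u w : BV p q}
    (U : (barrierGraph p q).Walk u w) :
    ∃ D E : ℤ,
      ((posF p q j w : ZMod (p * q - p)) = (posF p q j u : ZMod (p * q - p)) + D) ∧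
      ((posG p q j w : ZMod (p * q - p)) = (posG p q j u : ZMod (p * q - p)) + E) ∧
      (D - E = ((posF p q j w : ℤ) - posG p q j w) - ((posF p q j u : ℤ) - posG p q j u)) ∧
      D.natAbs ≤ U.length ∧ E.natAbs ≤ U.length ∧
      (cparN p q j w % 2 = (cparN p q j u + U.length) % 2) ∧
      ((∃ v ∈ U.support, v ∉ innerCycle p q j) → u ∈ innerCycle p q j →
        w ∈ innerCycle p q j → (D.natAbs + 1 ≤ U.length ∨ E.natAbs + 1 ≤ U.length)) := by
  induction U with
  | nil =>
    refine ⟨0, 0, by simp, by simp, by simp, by simp, by simp, by simp, ?_⟩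
    rintro ⟨v, hv, hvS⟩ hu _
    simp only [SimpleGraph.Walk.support_nil, List.mem_singleton] at hv
    subst hv; exact absurd hu hvS
  | @cons a b c hadj U ih =>
    obtain ⟨s1, s2, st1, st2, st3, st4, st5, st6, st7, st8⟩ := step_adj p q j hp hp2 hq hadj
    obtain ⟨D, E, i1, i2, i3, i4, i5, i6, i7⟩ := ih
    refine ⟨s1 + D, s2 + E, ?_, ?_, by omega, ?_, ?_, ?_, ?_⟩
    · rw [i1, st3]; push_cast; ring
    · rw [i2, st4]; push_cast; ring
    · simp only [SimpleGraph.Walk.length_cons]; omega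
    · simp only [SimpleGraph.Walk.length_cons]; omega
    · simp only [SimpleGraph.Walk.length_cons]; omega
    · rintro ⟨v, hv, hvS⟩ ha hc
      simp only [SimpleGraph.Walk.support_cons, List.mem_cons] at hv
      simp only [SimpleGraph.Walk.length_cons]
      by_cases hbS : b ∈ innerCycle p q j
      · have hv' : v ∈ U.support := by
          rcases hv with rfl | hv'
          · exact absurd ha hvS
          · exact hv'
        rcases i7 ⟨v, hv', hvS⟩ hbS hc with h | h
        · left; omega
        · right; omega
      · rcases st7 ha hbS with h0 | h0
        · left; omega
        · right; omega

lemma cycd_le {m : ℕ} (hm : 0 < m) (z : ZMod m) (D : ℤ) (h : (D : ZMod m) = z) :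
    min z.val (m - z.val) ≤ D.natAbs := by
  haveI : NeZero m := ⟨hm.ne'⟩
  have hzv : z.val < m := ZMod.val_lt z
  have hdvd : (m : ℤ) ∣ D - z.val := by
    rw [← ZMod.intCast_zmod_eq_zero_iff_dvd]
    push_cast
    rw [h, ZMod.natCast_val, ZMod.cast_id]
    ring
  obtain ⟨k, hk⟩ := hdvd
  rcases le_or_gt 0 k with h0 | h0
  · have : 0 ≤ (m : ℤ) * k := mul_nonneg (by positivity) h0
    omega
  · have h1 : (m : ℤ) * k ≤ m * (-1) := by
      apply mul_le_mul_of_nonneg_left (by omega) (by positivity)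
    have h2 : (m : ℤ) * (-1) = -m := by ring
    omega

end Stmt12Aux

namespace Stmt12Aux
variable (p q : ℕ) (j : ZMod (p * q))

def EV (hq : 2 ≤ q) (t : ℕ) : BV p q :=
  if t % (2 * q - 2) = 0 then
    Sum.inl (j + ((2 * q * (t / (2 * q - 2)) : ℕ) : ZMod (p * q)))
  else
    Sum.inr (j + ((2 * q * (t / (2 * q - 2)) : ℕ) : ZMod (p * q)),
      ⟨t % (2 * q - 2) - 1, by
        have := Nat.mod_lt t (show 0 < 2 * q - 2 by omega); omega⟩)

lemma EV_mem (hq : 2 ≤ q) (t : ℕ) : EV p q j hq t ∈ innerCycle p q j := by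
  unfold EV
  split
  · exact ⟨t / (2 * q - 2), Or.inl rfl⟩
  · exact ⟨t / (2 * q - 2), Or.inr ⟨_, rfl⟩⟩

lemma EV_adj (hq : 2 ≤ q) (t : ℕ) :
    (barrierGraph p q).Adj (EV p q j hq t) (EV p q j hq (t + 1)) := by
  have hK : 0 < 2 * q - 2 := by omega
  have hdm := Nat.div_add_mod t (2 * q - 2)
  have hxlt : t % (2 * q - 2) < 2 * q - 2 := Nat.mod_lt t hK
  set r := t / (2 * q - 2) with hr_def
  set x := t % (2 * q - 2) with hx_def
  rw [barrierGraph, SimpleGraph.fromRel_adj]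
  by_cases hx0 : x = 0
  · -- inl → inr 0
    have d0 : t + 1 = (2 * q - 2) * r + 1 := by omega
    have d1 : (t + 1) % (2 * q - 2) = 1 := by
      rw [d0, Nat.mul_add_mod, Nat.mod_eq_of_lt (by omega)]
    have d2 : (t + 1) / (2 * q - 2) = r := by
      rw [d0, Nat.mul_add_div hK, Nat.div_eq_of_lt (by omega), Nat.add_zero]
    have e1 : EV p q j hq t = Sum.inl (j + ((2 * q * r : ℕ) : ZMod (p * q))) := by
      rw [EV, if_pos hx0]
    have e2 : EV p q j hq (t + 1) =
        Sum.inr (j + ((2 * q * r : ℕ) : ZMod (p * q)), ⟨0, by omega⟩) := by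
      rw [EV, if_neg (by omega)]
      simp only [d1, d2]
    rw [e1, e2]
    refine ⟨by simp, Or.inl (Or.inr (Or.inl ⟨_, ⟨0, by omega⟩, rfl, rfl, rfl⟩))⟩
  · by_cases hxtop : x = 2 * q - 3
    · -- inr last → inl next
      have d0 : t + 1 = (2 * q - 2) * (r + 1) := by
        have : (2 * q - 2) * (r + 1) = (2 * q - 2) * r + (2 * q - 2) := by ring
        omega
      have d1 : (t + 1) % (2 * q - 2) = 0 := by rw [d0, Nat.mul_mod_right]
      have d2 : (t + 1) / (2 * q - 2) = r + 1 := by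
        rw [d0, Nat.mul_div_cancel_left _ hK]
      have e1 : EV p q j hq t =
          Sum.inr (j + ((2 * q * r : ℕ) : ZMod (p * q)), ⟨x - 1, by omega⟩) := by
        rw [EV, if_neg hx0]
      have e2 : EV p q j hq (t + 1) =
          Sum.inl (j + ((2 * q * (r + 1) : ℕ) : ZMod (p * q))) := by
        rw [EV, if_pos d1, d2]
      rw [e1, e2]
      refine ⟨by simp, Or.inl (Or.inr (Or.inr (Or.inr
        ⟨j + ((2 * q * r : ℕ) : ZMod (p * q)), ⟨x - 1, by omega⟩, by simp; omega, rfl, ?_⟩)))⟩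
      congr 1
      push_cast
      ring
    · -- inr x-1 → inr x
      have d0 : t + 1 = (2 * q - 2) * r + (x + 1) := by omega
      have d1 : (t + 1) % (2 * q - 2) = x + 1 := by
        rw [d0, Nat.mul_add_mod, Nat.mod_eq_of_lt (by omega)]
      have d2 : (t + 1) / (2 * q - 2) = r := by
        rw [d0, Nat.mul_add_div hK, Nat.div_eq_of_lt (by omega), Nat.add_zero]
      have e1 : EV p q j hq t =
          Sum.inr (j + ((2 * q * r : ℕ) : ZMod (p * q)), ⟨x - 1, by omega⟩) := by
        rw [EV, if_neg hx0]
      have e2 : EV p q j hq (t + 1) =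
          Sum.inr (j + ((2 * q * r : ℕ) : ZMod (p * q)), ⟨x, by omega⟩) := by
        rw [EV, if_neg (by omega)]
        simp only [d1, d2, Nat.add_sub_cancel]
      rw [e1, e2]
      refine ⟨?_, Or.inl (Or.inr (Or.inr (Or.inl
        ⟨_, ⟨x - 1, by omega⟩, ⟨x, by omega⟩, by simp; omega, rfl, rfl⟩)))⟩
      simp only [ne_eq, Sum.inr.injEq, Prod.mk.injEq, not_and]
      intro _
      intro hcon
      have := congrArg Fin.val hcon
      simp at this
      omega
end Stmt12Aux

namespace Stmt12Aux
variable (p q : ℕ) (j : ZMod (p * q))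

lemma EV_posF (hp : Even p) (hp2 : 2 ≤ p) (hq : 2 ≤ q) (t : ℕ) :
    posF p q j (EV p q j hq t) = t % (p * q - p) := by
  haveI : NeZero (p * q) := ⟨by positivity⟩
  obtain ⟨p₂, hp₂⟩ := hp
  have hp₂1 : 1 ≤ p₂ := by omega
  have hN : p * q = 2 * q * p₂ := by rw [hp₂]; ring
  have hm : p * q - p = (2 * q - 2) * p₂ := by
    have e2 : (2 * q - 2) * p₂ = 2 * q * p₂ - 2 * p₂ := by rw [Nat.sub_mul]
    have e3 : 2 * 2 * p₂ ≤ 2 * q * p₂ := Nat.mul_le_mul_right p₂ (by omega)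
    have e4 : 2 * 2 * p₂ = 4 * p₂ := by ring
    omega
  have hK : 0 < 2 * q - 2 := by omega
  have hdm := Nat.div_add_mod t (2 * q - 2)
  have hxlt : t % (2 * q - 2) < 2 * q - 2 := Nat.mod_lt t hK
  set r := t / (2 * q - 2) with hr_def
  set x := t % (2 * q - 2) with hx_def
  -- the value of the outer coordinate
  have hvc : ((j + ((2 * q * r : ℕ) : ZMod (p * q))) - j).val = 2 * q * (r % p₂) := by
    have e : (j + ((2 * q * r : ℕ) : ZMod (p * q))) - j = ((2 * q * r : ℕ) : ZMod (p * q)) := by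
      ring
    rw [e, ZMod.val_natCast, hN, Nat.mul_mod_mul_left]
  have hd1 : 2 * q * (r % p₂) / (2 * q) = r % p₂ := Nat.mul_div_cancel_left _ (by omega)
  have hd2 : 2 * q * (r % p₂) % (2 * q) = 0 := Nat.mul_mod_right _ _
  -- the target value
  have hrm : r % p₂ < p₂ := Nat.mod_lt r (by omega)
  have htm : t % ((2 * q - 2) * p₂) = (2 * q - 2) * (r % p₂) + x := by
    have hrdm := Nat.div_add_mod r p₂
    have e0 : (2 * q - 2) * r = (2 * q - 2) * p₂ * (r / p₂) + (2 * q - 2) * (r % p₂) := by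
      conv_lhs => rw [← hrdm]
      ring
    have e : t = (2 * q - 2) * p₂ * (r / p₂) + ((2 * q - 2) * (r % p₂) + x) := by omega
    rw [e, Nat.mul_add_mod, Nat.mod_eq_of_lt]
    have e5 : (2 * q - 2) * (r % p₂) + (2 * q - 2) ≤ (2 * q - 2) * p₂ := by
      have := Nat.mul_le_mul_left (2 * q - 2) (show r % p₂ + 1 ≤ p₂ by omega)
      have e6 : (2 * q - 2) * (r % p₂ + 1) = (2 * q - 2) * (r % p₂) + (2 * q - 2) := by ring
      omega
    omega
  have hcomm : (r % p₂) * (2 * q - 2) = (2 * q - 2) * (r % p₂) := Nat.mul_comm _ _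
  rw [hm, htm]
  unfold EV
  split
  · next h0 =>
    simp only [← hr_def, ← hx_def, posF, hvc, hd1, hd2]
    have : x = 0 := h0
    omega
  · next h0 =>
    simp only [← hr_def, ← hx_def, posF, hvc, hd1, hd2]
    have : x ≠ 0 := h0
    simp only [Nat.min_eq_left (by omega : (0:ℕ) ≤ 2 * q - 2)]
    omega

lemma EV_add_period (hp : Even p) (hp2 : 2 ≤ p) (hq : 2 ≤ q) (t : ℕ) :
    EV p q j hq (t + (p * q - p)) = EV p q j hq t := by
  obtain ⟨p₂, hp₂⟩ := hp
  have hN : p * q = 2 * q * p₂ := by rw [hp₂]; ring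
  have hm : p * q - p = (2 * q - 2) * p₂ := by
    have e2 : (2 * q - 2) * p₂ = 2 * q * p₂ - 2 * p₂ := by rw [Nat.sub_mul]
    have e3 : 2 * 2 * p₂ ≤ 2 * q * p₂ := Nat.mul_le_mul_right p₂ (by omega)
    have e4 : 2 * 2 * p₂ = 4 * p₂ := by ring
    omega
  have hK : 0 < 2 * q - 2 := by omega
  have hdm := Nat.div_add_mod t (2 * q - 2)
  have d0 : t + (p * q - p) = (2 * q - 2) * (t / (2 * q - 2) + p₂) + t % (2 * q - 2) := by
    have : (2 * q - 2) * (t / (2 * q - 2) + p₂) =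
        (2 * q - 2) * (t / (2 * q - 2)) + (2 * q - 2) * p₂ := by ring
    omega
  obtain ⟨hd1, hd2⟩ := divmod (Q := 2 * q - 2) (t / (2 * q - 2) + p₂) (t % (2 * q - 2))
    (Nat.mod_lt t hK)
  have hcoord : ((2 * q * (t / (2 * q - 2) + p₂) : ℕ) : ZMod (p * q)) =
      ((2 * q * (t / (2 * q - 2)) : ℕ) : ZMod (p * q)) := by
    have e : 2 * q * (t / (2 * q - 2) + p₂) = 2 * q * (t / (2 * q - 2)) + p * q := by
      rw [hN]; ring
    rw [e, Nat.cast_add, ZMod.natCast_self, add_zero]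
  rw [d0]
  unfold EV
  simp only [hd1, hd2, hcoord]

lemma EV_congr (hp : Even p) (hp2 : 2 ≤ p) (hq : 2 ≤ q) {s t : ℕ}
    (h : s % (p * q - p) = t % (p * q - p)) : EV p q j hq s = EV p q j hq t := by
  have hmpos : 0 < p * q - p := by
    have h1 : p * 2 ≤ p * q := Nat.mul_le_mul_left p hq
    have h2 : p * 2 = p + p := by ring
    omega
  have key : ∀ u : ℕ, EV p q j hq u = EV p q j hq (u % (p * q - p)) := by
    intro u
    have : ∀ c u : ℕ, EV p q j hq (u + (p * q - p) * c) = EV p q j hq u := by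
      intro c
      induction c with
      | zero => intro u; simp
      | succ c ih =>
        intro u
        have e : u + (p * q - p) * (c + 1) = (u + (p * q - p) * c) + (p * q - p) := by ring
        rw [e, EV_add_period p q j hp hp2 hq, ih]
    conv_lhs => rw [← Nat.mod_add_div u (p * q - p)]
    exact this _ _
  rw [key s, key t, h]

def Ewalk (hq : 2 ≤ q) : (k t : ℕ) → (barrierGraph p q).Walk (EV p q j hq t) (EV p q j hq (t + k))
  | 0, _ => SimpleGraph.Walk.nil
  | (k + 1), t =>
      ((Ewalk hq k t).concat (by
        have : t + k + 1 = t + (k + 1) := by omega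
        exact this ▸ EV_adj p q j hq (t + k)))

lemma Ewalk_length (hq : 2 ≤ q) (k t : ℕ) : (Ewalk p q j hq k t).length = k := by
  induction k with
  | zero => rfl
  | succ k ih =>
    rw [Ewalk, SimpleGraph.Walk.length_concat, ih]

lemma EV_exists (hq : 2 ≤ q) {a : BV p q} (ha : a ∈ innerCycle p q j) :
    ∃ t, EV p q j hq t = a := by
  have hK : 0 < 2 * q - 2 := by omega
  obtain ⟨r, h | ⟨x, h⟩⟩ := ha
  · refine ⟨(2 * q - 2) * r, ?_⟩
    rw [EV, if_pos (Nat.mul_mod_right _ _), Nat.mul_div_cancel_left _ hK]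
    exact h.symm
  · refine ⟨(2 * q - 2) * r + (x.val + 1), ?_⟩
    have hxb : x.val + 1 < 2 * q - 2 := by omega
    obtain ⟨hd1, hd2⟩ := divmod (Q := 2 * q - 2) r (x.val + 1) hxb
    rw [EV, if_neg (by omega), h]
    simp only [hd1, hd2, Nat.add_sub_cancel, Sum.inr.injEq, Prod.mk.injEq]

lemma exists_walk_val (hp : Even p) (hp2 : 2 ≤ p) (hq : 2 ≤ q) {a b : BV p q}
    (ha : a ∈ innerCycle p q j) (hb : b ∈ innerCycle p q j) :
    ∃ U : (barrierGraph p q).Walk a b,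
      U.length = ((posF p q j b : ZMod (p * q - p)) - (posF p q j a : ZMod (p * q - p))).val := by
  have hmpos : 0 < p * q - p := by
    have h1 : p * 2 ≤ p * q := Nat.mul_le_mul_left p hq
    have h2 : p * 2 = p + p := by ring
    omega
  haveI : NeZero (p * q - p) := ⟨hmpos.ne'⟩
  obtain ⟨ta, hta⟩ := EV_exists p q j hq ha
  obtain ⟨tb, htb⟩ := EV_exists p q j hq hb
  set Δ := ((posF p q j b : ZMod (p * q - p)) - (posF p q j a : ZMod (p * q - p))) with hΔ
  have hpa : posF p q j a = ta % (p * q - p) := by rw [← hta]; exact EV_posF p q j hp hp2 hq ta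
  have hpb : posF p q j b = tb % (p * q - p) := by rw [← htb]; exact EV_posF p q j hp hp2 hq tb
  have hcast : ((ta + Δ.val : ℕ) : ZMod (p * q - p)) = (tb : ZMod (p * q - p)) := by
    push_cast
    rw [ZMod.natCast_val, ZMod.cast_id, hΔ, hpa, hpb, ZMod.natCast_mod, ZMod.natCast_mod]
    ring
  have hmod : (ta + Δ.val) % (p * q - p) = tb % (p * q - p) :=
    (ZMod.natCast_eq_natCast_iff _ _ _).1 hcast
  refine ⟨(Ewalk p q j hq Δ.val ta).copy hta ?_, ?_⟩
  · rw [EV_congr p q j hp hp2 hq hmod, htb]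
  · rw [SimpleGraph.Walk.length_copy, Ewalk_length]

end Stmt12Aux

open Stmt12Aux

/-- Any simple path between two vertices `a, b` of the same inner cycle that
uses at least one edge not contained in that inner cycle has length at least
`dist(a,b) + 2`. -/
theorem stmt12 (p q : ℕ) (hp : Even p) (hp2 : 2 ≤ p) (hq : 2 ≤ q)
    (j : ZMod (p * q)) (a b : BV p q)
    (ha : a ∈ innerCycle p q j) (hb : b ∈ innerCycle p q j)
    (W : (barrierGraph p q).Walk a b) (hW : W.IsPath)
    (hout : ∃ e ∈ W.edges, ¬ ∀ v ∈ e, v ∈ innerCycle p q j) :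
    (barrierGraph p q).dist a b + 2 ≤ W.length := by
  have hmpos : 0 < p * q - p := by
    have h1 : p * 2 ≤ p * q := Nat.mul_le_mul_left p hq
    have h2 : p * 2 = p + p := by ring
    omega
  haveI : NeZero (p * q - p) := ⟨hmpos.ne'⟩
  set Δ := ((posF p q j b : ZMod (p * q - p)) - (posF p q j a : ZMod (p * q - p))) with hΔ
  set L := min Δ.val (p * q - p - Δ.val) with hL
  have hvlt : Δ.val < p * q - p := ZMod.val_lt Δ
  -- an inner-cycle walk of length L
  obtain ⟨U, hU⟩ : ∃ U : (barrierGraph p q).Walk a b, U.length = L := by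
    rcases le_or_gt Δ.val (p * q - p - Δ.val) with hle | hlt
    · obtain ⟨U, hU⟩ := exists_walk_val p q j hp hp2 hq ha hb
      exact ⟨U, by rw [hU, hL, min_eq_left hle]⟩
    · obtain ⟨U, hU⟩ := exists_walk_val p q j hp hp2 hq hb ha
      have hΔne : Δ ≠ 0 := by
        intro h0
        rw [h0] at hlt
        simp at hlt
      haveI : NeZero Δ := ⟨hΔne⟩
      have hneg : (posF p q j a : ZMod (p * q - p)) - (posF p q j b : ZMod (p * q - p)) = -Δ := by
        rw [hΔ]; ring
      refine ⟨U.reverse, ?_⟩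
      rw [SimpleGraph.Walk.length_reverse, hU, hneg, ZMod.val_neg_of_ne_zero, hL,
        min_eq_right (by omega)]
  -- distance bound
  have hdist : (barrierGraph p q).dist a b ≤ L := hU ▸ SimpleGraph.dist_le U
  -- parity of L
  obtain ⟨_, _, _, _, _, _, _, hparU, _⟩ := walk_bound p q j hp hp2 hq U
  -- walk bound for W
  obtain ⟨D, E, w1, w2, w3, w4, w5, w6, w7⟩ := walk_bound p q j hp hp2 hq W
  -- there is a support vertex outside the inner cycle
  have hexit : ∃ v ∈ W.support, v ∉ innerCycle p q j := by
    obtain ⟨e, he, hne⟩ := hout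
    induction e with
    | h x y =>
      push_neg at hne
      obtain ⟨v, hv, hvS⟩ := hne
      rw [Sym2.mem_iff] at hv
      rcases hv with rfl | rfl
      · exact ⟨v, SimpleGraph.Walk.fst_mem_support_of_mem_edges W he, hvS⟩
      · exact ⟨v, SimpleGraph.Walk.snd_mem_support_of_mem_edges W he, hvS⟩
  -- D = E
  have hDE : D = E := by
    have e1 := pos_eq_of_mem p q j hp hp2 hq ha
    have e2 := pos_eq_of_mem p q j hp hp2 hq hb
    omega
  have hDlen : D.natAbs + 1 ≤ W.length := by
    rcases w7 hexit ha hb with h | h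
    · exact h
    · omega
  have hcyc : L ≤ D.natAbs := by
    have hcast : ((D : ℤ) : ZMod (p * q - p)) = Δ := by rw [hΔ, w1]; ring
    exact cycd_le hmpos Δ D hcast
  -- parity comparison
  have hpar : (cparN p q j a + L) % 2 = (cparN p q j a + W.length) % 2 := by
    rw [hU] at hparU
    omega
  omega
end
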